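/- Let f : ℝ^n → ℝ be locally Lipschitz and let a ∈ ℝ^n. Then the Clarke generalized gradient ∂f(a), defined as the convex hull of all limits lim grad f(x_ν) along sequences x_ν → a of differentiability points of f, is a nonempty compact convex subset of ℝ^n. -/

import Mathlib

open Filter Topology

open MeasureTheory in

theorem myIsCompact_convexHull {E : Type*} [NormedAddCommGroup E] [NormedSpace ℝ E]
    [FiniteDimensional ℝ E] {s : Set E} (hs : IsCompact s) :
    IsCompact (convexHull ℝ s) := by
  rcases s.eq_empty_or_nonempty with rfl | ⟨x₀, hx₀⟩
  · simpa using isCompact_empty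
  set N := Module.finrank ℝ E + 1 with hN
  set φ : (Fin N → ℝ) × (Fin N → E) → E := fun p => ∑ i, p.1 i • p.2 i with hφ
  have hcont : Continuous φ := by
    apply continuous_finset_sum
    intro i _
    exact ((continuous_apply i).comp continuous_fst).smul
      ((continuous_apply i).comp continuous_snd)
  have hK : IsCompact ((stdSimplex ℝ (Fin N)) ×ˢ Set.pi Set.univ (fun _ : Fin N => s)) :=
    (isCompact_stdSimplex ℝ (Fin N)).prod (isCompact_univ_pi fun _ => hs)
  have himg : convexHull ℝ s =
      φ '' ((stdSimplex ℝ (Fin N)) ×ˢ Set.pi Set.univ (fun _ : Fin N => s)) := by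
    apply Set.Subset.antisymm
    · intro x hx
      obtain ⟨ι, hι, z, w, hzs, hindep, hwpos, hwsum, hx⟩ :=
        eq_pos_convex_span_of_mem_convexHull hx
      have hcard : Fintype.card ι ≤ N :=
        hindep.card_le_finrank_succ.trans (Nat.add_le_add_right (Submodule.finrank_le _) 1)
      obtain ⟨e⟩ : Nonempty (ι ↪ Fin N) := by
        exact ⟨(Fintype.equivFin ι).toEmbedding.trans (Fin.castLEEmb hcard)⟩
      classical
      set w' : Fin N → ℝ := fun j => if h : ∃ i, e i = j then w h.choose else 0 with hw'
      set z' : Fin N → E := fun j => if h : ∃ i, e i = j then z h.choose else x₀ with hz'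
      have hspec : ∀ i : ι, w' (e i) = w i ∧ z' (e i) = z i := by
        intro i
        have h : ∃ i', e i' = e i := ⟨i, rfl⟩
        have hi : h.choose = i := e.injective h.choose_spec
        constructor <;> simp [hw', hz', dif_pos h, hi]
      refine ⟨(w', z'), ⟨?_, ?_⟩, ?_⟩
      · constructor
        · intro j
          by_cases h : ∃ i, e i = j
          · simp only [hw', dif_pos h]; exact (hwpos _).le
          · simp [hw', dif_neg h]
        · calc ∑ j : Fin N, w' j = ∑ j ∈ Finset.univ.map e, w' j := by
                refine (Finset.sum_subset (Finset.subset_univ _) ?_).symm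
                intro j _ hj
                have h : ¬ ∃ i, e i = j := by simpa [Finset.mem_map] using hj
                simp [hw', dif_neg h]
            _ = ∑ i : ι, w' (e i) := Finset.sum_map _ e w'
            _ = ∑ i : ι, w i := Finset.sum_congr rfl fun i _ => (hspec i).1
            _ = 1 := hwsum
      · intro j _
        by_cases h : ∃ i, e i = j
        · simp only [hz', dif_pos h]; exact hzs ⟨_, rfl⟩
        · simpa [hz', dif_neg h] using hx₀
      · show ∑ j : Fin N, w' j • z' j = x
        calc ∑ j : Fin N, w' j • z' j = ∑ j ∈ Finset.univ.map e, w' j • z' j := by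
              refine (Finset.sum_subset (Finset.subset_univ _) ?_).symm
              intro j _ hj
              have h : ¬ ∃ i, e i = j := by simpa [Finset.mem_map] using hj
              simp [hw', dif_neg h]
          _ = ∑ i : ι, w' (e i) • z' (e i) := Finset.sum_map _ e _
          _ = ∑ i : ι, w i • z i := Finset.sum_congr rfl fun i _ => by
                rw [(hspec i).1, (hspec i).2]
          _ = x := hx
    · rintro x ⟨⟨w, z⟩, ⟨⟨hw0, hw1⟩, hz⟩, rfl⟩
      exact (convex_convexHull ℝ s).sum_mem (fun i _ => hw0 i) hw1
        (fun i _ => subset_convexHull ℝ s (hz i (Set.mem_univ i)))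
  rw [himg]
  exact hK.image hcont


/-- The Clarke generalized gradient. -/
noncomputable def clarkeGradient {E : Type*} [NormedAddCommGroup E] [NormedSpace ℝ E]
    (f : E → ℝ) (a : E) : Set (E →L[ℝ] ℝ) :=
  convexHull ℝ {L | ∃ u : ℕ → E, (∀ n, DifferentiableAt ℝ f (u n)) ∧
    Tendsto u atTop (𝓝 a) ∧ Tendsto (fun n => fderiv ℝ f (u n)) atTop (𝓝 L)}

/-- For a locally Lipschitz `f : ℝ^n → ℝ`, the Clarke generalized gradient at any
point is a nonempty compact convex set. -/
theorem clarkeGradient_nonempty_compact_convex (n : ℕ)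
    (f : EuclideanSpace ℝ (Fin n) → ℝ) (hf : LocallyLipschitz f)
    (a : EuclideanSpace ℝ (Fin n)) :
    (clarkeGradient f a).Nonempty ∧ IsCompact (clarkeGradient f a) ∧
      Convex ℝ (clarkeGradient f a) := by
  open MeasureTheory in
  set S : Set (EuclideanSpace ℝ (Fin n) →L[ℝ] ℝ) := {L | ∃ u : ℕ → EuclideanSpace ℝ (Fin n), (∀ k, DifferentiableAt ℝ f (u k)) ∧
    Tendsto u atTop (𝓝 a) ∧ Tendsto (fun k => fderiv ℝ f (u k)) atTop (𝓝 L)} with hS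
  obtain ⟨K, t, htmem, hlip⟩ := hf a
  obtain ⟨ε, hε, hball⟩ := Metric.mem_nhds_iff.1 htmem
  have hdiff : ∀ᵐ x ∂(volume : Measure (EuclideanSpace ℝ (Fin n))), x ∈ t → DifferentiableWithinAt ℝ f t x :=
    hlip.ae_differentiableWithinAt_of_mem
  have hbound : ∀ y : EuclideanSpace ℝ (Fin n), y ∈ Metric.ball a ε → ‖fderiv ℝ f y‖ ≤ K := fun y hy =>
    norm_fderiv_le_of_lipschitzOn ℝ
      (Filter.mem_of_superset (Metric.isOpen_ball.mem_nhds hy) hball) hlip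
  have key : ∀ δ : ℝ, 0 < δ → ∃ x : EuclideanSpace ℝ (Fin n), dist x a < min δ ε ∧ DifferentiableAt ℝ f x := by
    intro δ hδ
    by_contra h
    push_neg at h
    have hsub : Metric.ball a (min δ ε) ⊆
        {x | ¬ (x ∈ t → DifferentiableWithinAt ℝ f t x)} := by
      intro x hx
      simp only [Set.mem_setOf_eq]
      intro hxd
      have hxball : x ∈ Metric.ball a ε :=
        Metric.mem_ball.2 ((Metric.mem_ball.1 hx).trans_le (min_le_right _ _))
      have : DifferentiableAt ℝ f x := (hxd (hball hxball)).differentiableAt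
        (Filter.mem_of_superset (Metric.isOpen_ball.mem_nhds hxball) hball)
      exact h x (Metric.mem_ball.1 hx) this
    have h0 : volume (Metric.ball a (min δ ε)) = 0 :=
      measure_mono_null hsub (by simpa [ae_iff] using hdiff)
    exact (Metric.measure_ball_pos volume a (lt_min hδ hε)).ne' h0
  choose x hx1 hx2 using fun k : ℕ => key (1/(k+1)) (by positivity)
  have htendx : Tendsto x atTop (𝓝 a) :=
    tendsto_iff_dist_tendsto_zero.2 (squeeze_zero (fun k => dist_nonneg)
      (fun k => ((hx1 k).le.trans (min_le_left _ _)))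
      tendsto_one_div_add_atTop_nhds_zero_nat)
  have hb : ∀ k, fderiv ℝ f (x k) ∈ Metric.closedBall (0 : EuclideanSpace ℝ (Fin n) →L[ℝ] ℝ) K := fun k =>
    mem_closedBall_zero_iff.2 (hbound _ (Metric.mem_ball.2
      ((Metric.mem_ball.1 (Metric.mem_ball.2 ((hx1 k).trans_le (min_le_right _ _)))))))
  obtain ⟨L, hLmem, φ, hφmono, hφtend⟩ :=
    (isCompact_closedBall (0 : EuclideanSpace ℝ (Fin n) →L[ℝ] ℝ) K).tendsto_subseq hb
  have hLS : L ∈ S := ⟨x ∘ φ, fun k => hx2 _, htendx.comp hφmono.tendsto_atTop, hφtend⟩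
  have hSsub : S ⊆ Metric.closedBall 0 K := by
    rintro L' ⟨u, hud, hua, huf⟩
    rw [Metric.mem_closedBall, dist_zero_right]
    have hev : ∀ᶠ k in atTop, ‖fderiv ℝ f (u k)‖ ≤ K := by
      filter_upwards [hua (Metric.ball_mem_nhds a hε)] with k hk
      exact hbound _ hk
    exact le_of_tendsto huf.norm hev
  have hSclosed : IsClosed S := by
    apply IsSeqClosed.isClosed
    rintro Lk L' hLk hLtend
    have hex : ∀ k : ℕ, ∃ y : EuclideanSpace ℝ (Fin n), DifferentiableAt ℝ f y ∧ dist y a < 1/(k+1) ∧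
        dist (fderiv ℝ f y) (Lk k) < 1/(k+1) := by
      intro k
      obtain ⟨u, hud, hua, huf⟩ := hLk k
      have h1 : ∀ᶠ m in atTop, dist (u m) a < 1/(k+1) :=
        (Metric.tendsto_nhds.1 hua) _ (by positivity)
      have h2 : ∀ᶠ m in atTop, dist (fderiv ℝ f (u m)) (Lk k) < 1/(k+1) :=
        (Metric.tendsto_nhds.1 huf) _ (by positivity)
      obtain ⟨m, hm1, hm2⟩ := (h1.and h2).exists
      exact ⟨u m, hud m, hm1, hm2⟩
    choose y hy1 hy2 hy3 using hex
    refine ⟨y, hy1, ?_, ?_⟩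
    · exact tendsto_iff_dist_tendsto_zero.2 (squeeze_zero (fun k => dist_nonneg)
        (fun k => (hy2 k).le) tendsto_one_div_add_atTop_nhds_zero_nat)
    · rw [tendsto_iff_dist_tendsto_zero]
      have hd : ∀ k, dist (fderiv ℝ f (y k)) L' ≤ 1/(k+1) + dist (Lk k) L' := fun k =>
        (dist_triangle _ (Lk k) L').trans (add_le_add_left (hy3 k).le _)
      have hlim : Tendsto (fun k : ℕ => 1/(k+1 : ℝ) + dist (Lk k) L') atTop (𝓝 (0 + 0)) :=
        tendsto_one_div_add_atTop_nhds_zero_nat.add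
          (tendsto_iff_dist_tendsto_zero.1 hLtend)
      exact squeeze_zero (fun k => dist_nonneg) hd (by simpa using hlim)
  have hScompact : IsCompact S :=
    (isCompact_closedBall (0 : EuclideanSpace ℝ (Fin n) →L[ℝ] ℝ) K).of_isClosed_subset hSclosed hSsub
  have hCG : clarkeGradient f a = convexHull ℝ S := rfl
  rw [hCG]
  exact ⟨⟨L, subset_convexHull ℝ S hLS⟩, myIsCompact_convexHull hScompact,
    convex_convexHull ℝ S⟩
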